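/- arXiv:2306.09985 — 3 statements merged into one kernel-verified Lean document; each statement's English description precedes it below -/
import Mathlib

section
/- Let v1, v2 be linearly independent future-pointing light-like vectors in R^{2,1}, and let n̂ = (v2 ⊠ v1)/⟨v1,v2⟩ be the associated unit space-like vector. If v1 and v2 are infinitesimally deformed by Killing fields X1, X2 ∈ R^{2,1} (i.e., v_i(t) = v_i + t(X_i ⊠ v_i) + O(t^2)), then the derivative at t=0 of the horoball-connection length l(t) = ln(-⟨v1(t),v2(t)⟩/2) equals ⟨X2 - X1, n̂⟩. -/
/-- The Minkowski bilinear form of signature (2,1) on `ℝ³`. -/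
def mdot (u v : Fin 3 → ℝ) : ℝ := u 0 * v 0 + u 1 * v 1 - u 2 * v 2

/-- The Minkowski cross product on `ℝ^{2,1}`. -/
def mcross (u v : Fin 3 → ℝ) : Fin 3 → ℝ :=
  ![-(u 1) * v 2 + u 2 * v 1, -(u 2) * v 0 + u 0 * v 2, u 0 * v 1 - u 1 * v 0]

/-- If two decorated ideal points `v1, v2` (linearly independent future-pointing
light-like vectors) are infinitesimally deformed by Killing fields `X1, X2`
(i.e. `vᵢ(t) = vᵢ + t (Xᵢ ⊠ vᵢ) + O(t²)`), then the derivative at `t = 0` of the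
horoball-connection length `l(t) = ln(-⟨v1(t),v2(t)⟩/2)` equals `⟨X2 - X1, n̂⟩`,
where `n̂ = (v2 ⊠ v1)/⟨v1,v2⟩` is the associated unit space-like vector. -/
theorem horoLength_deriv (v1 v2 X1 X2 : Fin 3 → ℝ)
    (h1 : mdot v1 v1 = 0) (h2 : mdot v2 v2 = 0)
    (hf1 : 0 < v1 2) (hf2 : 0 < v2 2)
    (hli : LinearIndependent ℝ ![v1, v2])
    (v1t v2t : ℝ → Fin 3 → ℝ)
    (hv10 : v1t 0 = v1) (hv20 : v2t 0 = v2)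
    (hd1 : HasDerivAt v1t (mcross X1 v1) 0)
    (hd2 : HasDerivAt v2t (mcross X2 v2) 0) :
    HasDerivAt (fun t => Real.log (-(mdot (v1t t) (v2t t)) / 2))
      (mdot (X2 - X1) ((mdot v1 v2)⁻¹ • mcross v2 v1)) 0 := by
  have hz1 : v1 2 ≠ 0 := ne_of_gt hf1
  -- Step 1: ⟨v1, v2⟩ ≠ 0
  have hc : mdot v1 v2 ≠ 0 := by
    intro h
    have key : v1 0 * v2 1 - v1 1 * v2 0 = 0 := by
      have sq0 : (v1 0 * v2 1 - v1 1 * v2 0) ^ 2 = 0 := by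
        unfold mdot at h1 h2 h
        linear_combination (v2 0 ^ 2 + v2 1 ^ 2) * h1 + (v1 2 ^ 2) * h2 -
          (v1 0 * v2 0 + v1 1 * v2 1 + v1 2 * v2 2) * h
      exact pow_eq_zero_iff (by norm_num) |>.mp sq0
    have hx : v2 2 * v1 0 - v1 2 * v2 0 = 0 := by
      have h3 : v1 2 * (v2 2 * v1 0 - v1 2 * v2 0) = 0 := by
        unfold mdot at h1 h
        linear_combination v2 0 * h1 - v1 0 * h + v1 1 * key
      rcases mul_eq_zero.mp h3 with h' | h'
      · exact absurd h' hz1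
      · exact h'
    have hy : v2 2 * v1 1 - v1 2 * v2 1 = 0 := by
      have h3 : v1 2 * (v2 2 * v1 1 - v1 2 * v2 1) = 0 := by
        unfold mdot at h1 h
        linear_combination v2 1 * h1 - v1 1 * h - v1 0 * key
      rcases mul_eq_zero.mp h3 with h' | h'
      · exact absurd h' hz1
      · exact h'
    have hrel : (v2 2) • v1 + (-(v1 2)) • v2 = 0 := by
      funext i
      fin_cases i <;>
        simp only [Pi.add_apply, Pi.smul_apply, smul_eq_mul, Pi.zero_apply, neg_mul]
      · show v2 2 * v1 0 + -(v1 2 * v2 0) = 0; linarith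
      · show v2 2 * v1 1 + -(v1 2 * v2 1) = 0; linarith
      · show v2 2 * v1 2 + -(v1 2 * v2 2) = 0; ring
    have := (LinearIndependent.pair_iff.mp hli (v2 2) (-(v1 2)) hrel).2
    exact hz1 (neg_eq_zero.mp this)
  -- Step 2: derivative of t ↦ ⟨v1(t), v2(t)⟩
  have hdc1 : ∀ i, HasDerivAt (fun t => v1t t i) (mcross X1 v1 i) 0 :=
    hasDerivAt_pi.mp hd1
  have hdc2 : ∀ i, HasDerivAt (fun t => v2t t i) (mcross X2 v2 i) 0 :=
    hasDerivAt_pi.mp hd2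
  have hm : HasDerivAt (fun t => mdot (v1t t) (v2t t))
      (mdot (mcross X1 v1) v2 + mdot v1 (mcross X2 v2)) 0 := by
    have h' := (((hdc1 0).mul (hdc2 0)).add ((hdc1 1).mul (hdc2 1))).sub
      ((hdc1 2).mul (hdc2 2))
    simp only [mdot]
    refine h'.congr_deriv ?_
    simp only [hv10, hv20]
    ring
  have hne : -(mdot (v1t 0) (v2t 0)) / 2 ≠ 0 := by
    rw [hv10, hv20]
    intro h
    apply hc
    field_simp at h
    linarith
  have hl := ((hm.neg).div_const 2).log hne
  convert hl using 1
  · rfl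
  simp only [Pi.neg_apply, hv10, hv20]
  set c := mdot v1 v2 with hcdef
  have hdiv : -(mdot (mcross X1 v1) v2 + mdot v1 (mcross X2 v2)) / 2 / (-c / 2)
      = (mdot (mcross X1 v1) v2 + mdot v1 (mcross X2 v2)) / c := by
    field_simp
  rw [hdiv, eq_div_iff hc]
  simp only [mdot, mcross, Pi.sub_apply, Pi.smul_apply, smul_eq_mul,
    Matrix.cons_val_zero, Matrix.cons_val_one, Matrix.head_cons,
    Matrix.cons_val_two, Matrix.tail_cons]
  field_simp
  ring
end

section
/- Let v1, v2 be linearly independent future-pointing light-like vectors in R^{2,1} and let w1, w2 ∈ R^{2,1}. Let A_i = w_i + v_i^⊥ be the affine light-like planes containing the photons L(w_i, v_i) = w_i + R v_i. If v ∈ L(w1,v1) ∩ A2 and v' ∈ L(w2,v2) ∩ A1, then v - v' = (⟨w1 - w2, v1 ⊠ v2⟩ / ‖v1 ⊠ v2‖^2) (v1 ⊠ v2). -/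
/-- Relative motion of two photons: if `v` is on the photon `L(w1,v1)` and in the
affine light-like plane `A2 = w2 + v2^⊥`, and `v'` is on `L(w2,v2)` and in
`A1 = w1 + v1^⊥`, then `v - v' = (⟨w1-w2, v1⊠v2⟩/‖v1⊠v2‖²) (v1⊠v2)`. -/
theorem photon_relative_motion (v1 v2 w1 w2 v v' : Fin 3 → ℝ)
    (h1 : mdot v1 v1 = 0) (h2 : mdot v2 v2 = 0)
    (hf1 : 0 < v1 2) (hf2 : 0 < v2 2)
    (hli : LinearIndependent ℝ ![v1, v2])
    (hv_photon : ∃ s : ℝ, v = w1 + s • v1)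
    (hv_A2 : mdot (v - w2) v2 = 0)
    (hv'_photon : ∃ t : ℝ, v' = w2 + t • v2)
    (hv'_A1 : mdot (v' - w1) v1 = 0) :
    v - v' = (mdot (w1 - w2) (mcross v1 v2) /
        mdot (mcross v1 v2) (mcross v1 v2)) • mcross v1 v2 := by
  obtain ⟨s, rfl⟩ := hv_photon
  obtain ⟨t, rfl⟩ := hv'_photon
  have hq1 : v1 0 * v1 0 + v1 1 * v1 1 - v1 2 * v1 2 = 0 := h1
  have hq2 : v2 0 * v2 0 + v2 1 * v2 1 - v2 2 * v2 2 = 0 := h2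
  have hc : v1 0 * v2 0 + v1 1 * v2 1 - v1 2 * v2 2 ≠ 0 := by
    intro hcc
    have hxy : (v1 2 * v2 0 - v2 2 * v1 0) ^ 2 + (v1 2 * v2 1 - v2 2 * v1 1) ^ 2 = 0 := by
      linear_combination (v1 2 * v1 2) * hq2 + (v2 2 * v2 2) * hq1 - (2 * v1 2 * v2 2) * hcc
    have hx : v1 2 * v2 0 - v2 2 * v1 0 = 0 := by
      nlinarith [sq_nonneg (v1 2 * v2 0 - v2 2 * v1 0), sq_nonneg (v1 2 * v2 1 - v2 2 * v1 1)]
    have hy : v1 2 * v2 1 - v2 2 * v1 1 = 0 := by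
      nlinarith [sq_nonneg (v1 2 * v2 0 - v2 2 * v1 0), sq_nonneg (v1 2 * v2 1 - v2 2 * v1 1)]
    have hprop : (-(v2 2)) • v1 + (v1 2) • v2 = 0 := by
      funext i
      fin_cases i
      · show -(v2 2) * v1 0 + v1 2 * v2 0 = 0
        linarith
      · show -(v2 2) * v1 1 + v1 2 * v2 1 = 0
        linarith
      · show -(v2 2) * v1 2 + v1 2 * v2 2 = 0
        ring
    have := (LinearIndependent.pair_iff.mp hli) (-(v2 2)) (v1 2) hprop
    exact absurd this.2 (by positivity)
  have hcmd : mdot v1 v2 = v1 0 * v2 0 + v1 1 * v2 1 - v1 2 * v2 2 := rfl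
  have hnn : mdot (mcross v1 v2) (mcross v1 v2) = mdot v1 v2 * mdot v1 v2 := by
    simp only [mdot, mcross, Matrix.cons_val_zero, Matrix.cons_val_one, Matrix.head_cons,
      Matrix.cons_val_two, Matrix.tail_cons]
    linear_combination (-(v2 0 * v2 0 + v2 1 * v2 1 - v2 2 * v2 2)) * hq1
  rw [hnn, hcmd]
  have hcc2 : (v1 0 * v2 0 + v1 1 * v2 1 - v1 2 * v2 2) *
      (v1 0 * v2 0 + v1 1 * v2 1 - v1 2 * v2 2) ≠ 0 := mul_ne_zero hc hc
  have hA2 : (w1 0 - w2 0) * v2 0 + (w1 1 - w2 1) * v2 1 - (w1 2 - w2 2) * v2 2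
      + s * (v1 0 * v2 0 + v1 1 * v2 1 - v1 2 * v2 2) = 0 := by
    have h := hv_A2
    simp only [mdot, Pi.add_apply, Pi.sub_apply, Pi.smul_apply, smul_eq_mul] at h
    linear_combination h
  have hA1 : -((w1 0 - w2 0) * v1 0 + (w1 1 - w2 1) * v1 1 - (w1 2 - w2 2) * v1 2)
      + t * (v1 0 * v2 0 + v1 1 * v2 1 - v1 2 * v2 2) = 0 := by
    have h := hv'_A1
    simp only [mdot, Pi.add_apply, Pi.sub_apply, Pi.smul_apply, smul_eq_mul] at h
    linear_combination h
  funext i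
  fin_cases i
  · show (w1 0 + s * v1 0) - (w2 0 + t * v2 0) =
      (mdot (w1 - w2) (mcross v1 v2) /
        ((v1 0 * v2 0 + v1 1 * v2 1 - v1 2 * v2 2) *
          (v1 0 * v2 0 + v1 1 * v2 1 - v1 2 * v2 2))) * mcross v1 v2 0
    simp only [mdot, mcross, Pi.sub_apply, Matrix.cons_val_zero, Matrix.cons_val_one,
      Matrix.head_cons, Matrix.cons_val_two, Matrix.tail_cons]
    rw [div_mul_eq_mul_div, eq_div_iff hcc2]
    linear_combination ((v1 0 * v2 0 + v1 1 * v2 1 - v1 2 * v2 2) * v1 0) * hA2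
      + (-(v1 0 * v2 0 + v1 1 * v2 1 - v1 2 * v2 2) * v2 0) * hA1
      + (-(v2 2)^2 * (w1 0 - w2 0) + (v2 1)^2 * (w1 0 - w2 0) + v2 0 * v2 2 * (w1 2 - w2 2)
          - v2 0 * v2 1 * (w1 1 - w2 1)) * hq1
      + (v1 0 * v1 2 * (w1 2 - w2 2) - v1 0 * v1 1 * (w1 1 - w2 1)
          - (v1 0)^2 * (w1 0 - w2 0)) * hq2
  · show (w1 1 + s * v1 1) - (w2 1 + t * v2 1) =
      (mdot (w1 - w2) (mcross v1 v2) /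
        ((v1 0 * v2 0 + v1 1 * v2 1 - v1 2 * v2 2) *
          (v1 0 * v2 0 + v1 1 * v2 1 - v1 2 * v2 2))) * mcross v1 v2 1
    simp only [mdot, mcross, Pi.sub_apply, Matrix.cons_val_zero, Matrix.cons_val_one,
      Matrix.head_cons, Matrix.cons_val_two, Matrix.tail_cons]
    rw [div_mul_eq_mul_div, eq_div_iff hcc2]
    linear_combination ((v1 0 * v2 0 + v1 1 * v2 1 - v1 2 * v2 2) * v1 1) * hA2
      + (-(v1 0 * v2 0 + v1 1 * v2 1 - v1 2 * v2 2) * v2 1) * hA1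
      + (-(v2 2)^2 * (w1 1 - w2 1) + v2 1 * v2 2 * (w1 2 - w2 2) - v2 0 * v2 1 * (w1 0 - w2 0)
          + (v2 0)^2 * (w1 1 - w2 1)) * hq1
      + (v1 1 * v1 2 * (w1 2 - w2 2) - (v1 1)^2 * (w1 1 - w2 1)
          - v1 0 * v1 1 * (w1 0 - w2 0)) * hq2
  · show (w1 2 + s * v1 2) - (w2 2 + t * v2 2) =
      (mdot (w1 - w2) (mcross v1 v2) /
        ((v1 0 * v2 0 + v1 1 * v2 1 - v1 2 * v2 2) *
          (v1 0 * v2 0 + v1 1 * v2 1 - v1 2 * v2 2))) * mcross v1 v2 2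
    simp only [mdot, mcross, Pi.sub_apply, Matrix.cons_val_zero, Matrix.cons_val_one,
      Matrix.head_cons, Matrix.cons_val_two, Matrix.tail_cons]
    rw [div_mul_eq_mul_div, eq_div_iff hcc2]
    linear_combination ((v1 0 * v2 0 + v1 1 * v2 1 - v1 2 * v2 2) * v1 2) * hA2
      + (-(v1 0 * v2 0 + v1 1 * v2 1 - v1 2 * v2 2) * v2 2) * hA1
      + ((v2 2)^2 * (w1 2 - w2 2) - v2 1 * v2 2 * (w1 1 - w2 1)
          - v2 0 * v2 2 * (w1 0 - w2 0)) * hq1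
      + (-(v1 1 * v1 2) * (w1 1 - w2 1) + (v1 1)^2 * (w1 2 - w2 2) - v1 0 * v1 2 * (w1 0 - w2 0)
          + (v1 0)^2 * (w1 2 - w2 2)) * hq2
end

section
/- Two photons L(w1,v1) = w1 + R v1 and L(w2,v2) = w2 + R v2, directed by linearly independent future-pointing light-like vectors v1, v2 in R^{2,1}, are disjoint if and only if ⟨w1 - w2, v1 ⊠ v2⟩ ≠ 0. -/
/-- Two photons `w1 + ℝ v1` and `w2 + ℝ v2`, directed by linearly independent
future-pointing light-like vectors, are disjoint iff `⟨w1 - w2, v1 ⊠ v2⟩ ≠ 0`. -/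
theorem photons_disjoint_iff (v1 v2 w1 w2 : Fin 3 → ℝ)
    (h1 : mdot v1 v1 = 0) (h2 : mdot v2 v2 = 0)
    (hf1 : 0 < v1 2) (hf2 : 0 < v2 2)
    (hli : LinearIndependent ℝ ![v1, v2]) :
    (∀ s t : ℝ, w1 + s • v1 ≠ w2 + t • v2) ↔ mdot (w1 - w2) (mcross v1 v2) ≠ 0 := by
  simp only [mdot, mcross, Pi.sub_apply, Matrix.cons_val_zero, Matrix.cons_val_one,
    Matrix.head_cons, Matrix.cons_val_two, Matrix.tail_cons] at h1 h2 ⊢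
  -- The key nondegeneracy fact: ⟨v1, v2⟩ ≠ 0.
  have hp : v1 0 * v2 0 + v1 1 * v2 1 - v1 2 * v2 2 ≠ 0 := by
    intro hp
    have hXY : (v2 0 * v1 2 - v1 0 * v2 2) ^ 2 + (v2 1 * v1 2 - v1 1 * v2 2) ^ 2 = 0 := by
      linear_combination (v1 2) ^ 2 * h2 + (v2 2) ^ 2 * h1 - 2 * (v1 2) * (v2 2) * hp
    have hX : v2 0 * v1 2 - v1 0 * v2 2 = 0 := by
      nlinarith [sq_nonneg (v2 0 * v1 2 - v1 0 * v2 2), sq_nonneg (v2 1 * v1 2 - v1 1 * v2 2)]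
    have hY : v2 1 * v1 2 - v1 1 * v2 2 = 0 := by
      nlinarith [sq_nonneg (v2 0 * v1 2 - v1 0 * v2 2), sq_nonneg (v2 1 * v1 2 - v1 1 * v2 2)]
    rw [LinearIndependent.pair_iff] at hli
    have hz := hli (v2 2) (-(v1 2)) ?_
    · linarith [hz.1]
    · funext i
      fin_cases i <;>
        simp only [Fin.zero_eta, Fin.mk_one, Fin.reduceFinMk, Pi.add_apply, Pi.smul_apply, smul_eq_mul, Pi.zero_apply]
      · linear_combination -hX
      · linear_combination -hY
      · ring
  constructor
  · intro hdisj hN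
    set p := v1 0 * v2 0 + v1 1 * v2 1 - v1 2 * v2 2 with hpdef
    set A := (w1 0 - w2 0) * v1 0 + (w1 1 - w2 1) * v1 1 - (w1 2 - w2 2) * v1 2 with hAdef
    set B := (w1 0 - w2 0) * v2 0 + (w1 1 - w2 1) * v2 1 - (w1 2 - w2 2) * v2 2 with hBdef
    have key : ∀ i : Fin 3, p * (w1 i - w2 i) = A * v2 i + B * v1 i := by
      intro i
      have key2 : p * (p * (w1 i - w2 i)) = p * (A * v2 i + B * v1 i) := by
        fin_cases i <;>
          simp only [Fin.zero_eta, Fin.mk_one, Fin.reduceFinMk, hpdef, hAdef, hBdef]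
        · linear_combination (-(v1 1) * v2 2 + v1 2 * v2 1) * hN +
            ((v2 0 ^ 2 + v2 1 ^ 2 - v2 2 ^ 2) * (w1 0 - w2 0) - B * v2 0) * h1 - (A * v1 0) * h2
        · linear_combination (-(v1 2) * v2 0 + v1 0 * v2 2) * hN +
            ((v2 0 ^ 2 + v2 1 ^ 2 - v2 2 ^ 2) * (w1 1 - w2 1) - B * v2 1) * h1 - (A * v1 1) * h2
        · linear_combination (v1 0 * v2 1 - v1 1 * v2 0) * hN +
            ((v2 0 ^ 2 + v2 1 ^ 2 - v2 2 ^ 2) * (w1 2 - w2 2) - B * v2 2) * h1 - (A * v1 2) * h2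
      exact mul_left_cancel₀ hp key2
    apply hdisj (-B / p) (A / p)
    funext i
    have := key i
    simp only [Pi.add_apply, Pi.smul_apply, smul_eq_mul]
    field_simp
    linear_combination this
  · intro hN s t heq
    apply hN
    have e0 := congrFun heq 0
    have e1 := congrFun heq 1
    have e2 := congrFun heq 2
    simp only [Pi.add_apply, Pi.smul_apply, smul_eq_mul] at e0 e1 e2
    linear_combination (-(v1 1) * v2 2 + v1 2 * v2 1) * e0 +
      (-(v1 2) * v2 0 + v1 0 * v2 2) * e1 - (v1 0 * v2 1 - v1 1 * v2 0) * e2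
end
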